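/- Let G be a building set in a geometric lattice L, let y ∈ L with y > ⊥, and let h be an atom of L with h ≰ y. Write F(L,G; y ∨ h) = {x₁,…,x_t} with h ≤ x_t. Then there exists a unique y′ ∈ [⊥, x_t] such that F(L,G; y) = {x₁,…,x_{t−1}} ∪ F(L,G; y′). -/

import Mathlib

/-- A finite lattice is geometric if it is atomistic and (upper) semimodular. -/
def IsGeomLat (L : Type) [Lattice L] [BoundedOrder L] [Fintype L] : Prop :=
  (∀ x : L, IsLUB {a : L | IsAtom a ∧ a ≤ x} x) ∧
  ∀ a b : L, a ⊓ b ⋖ a → b ⋖ a ⊔ b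

/-- The set of factors `F(L,G;x) = max G_{≤x}` of an element `x` with respect to
a subset `G ⊆ L`. -/
def factorsOf {L : Type} [Lattice L] [BoundedOrder L] (G : Set L) (x : L) : Set L :=
  {g | g ∈ G ∧ g ≤ x ∧ ∀ h ∈ G, h ≤ x → g ≤ h → g = h}

/-- A combinatorial building set in a (geometric) lattice `L`: a set `G` of
elements `> ⊥` such that for each `x > ⊥`, the join map from the product of the
lower intervals `[⊥, g]`, `g ∈ max G_{≤x}`, to `[⊥, x]` is a poset isomorphism
sending the `g`-th "unit vector" to `g`. -/
def IsBuildingSet (L : Type) [Lattice L] [BoundedOrder L] [Fintype L] [DecidableEq L]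
    (G : Set L) : Prop :=
  (∀ g ∈ G, ⊥ < g) ∧
  ∀ x : L, ⊥ < x →
    ∃ φ : ((g : factorsOf G x) → ↥(Set.Iic (g : L))) ≃o ↥(Set.Iic x),
      ∀ g : factorsOf G x,
        φ (fun h => if hh : h = g then ⟨(g : L), by simp [hh]⟩ else ⟨⊥, bot_le⟩) =
          ⟨(g : L), g.2.2.1⟩

/-- A partial building set `H` inside a building set `G`: `H ⊆ G`, `H` contains
all atoms, and the non-atomic part of `H` is an order filter of `G`. -/
def IsPartialBuilding (L : Type) [Lattice L] [BoundedOrder L] [Fintype L] [DecidableEq L]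
    (G H : Set L) : Prop :=
  H ⊆ G ∧ {a : L | IsAtom a} ⊆ H ∧
  ∀ g ∈ H, ¬ IsAtom g → ∀ h ∈ G, g ≤ h → h ∈ H

/-- `N` is `H`-nested: every antichain in `N` with at least two elements has its
join (computed in `L`) outside of `H`. -/
def IsNestedIn (L : Type) [Lattice L] [OrderBot L] (H : Set L) (N : Set L) : Prop :=
  ∀ S : Finset L, ↑S ⊆ N → 2 ≤ S.card → IsAntichain (· ≤ ·) (S : Set L) →
    S.sup id ∉ H

section Aux
variable {L : Type} [Lattice L] [BoundedOrder L] [Fintype L] [DecidableEq L]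

/-- the `g`-th unit vector in the product of lower intervals. -/
def unitVec {G : Set L} {x : L} (g : factorsOf G x) :
    (h : factorsOf G x) → ↥(Set.Iic (h : L)) :=
  fun h => if hh : h = g then ⟨(g : L), by simp [hh]⟩ else ⟨⊥, bot_le⟩

lemma unitVec_self {G : Set L} {x : L} (g : factorsOf G x) : unitVec g g = ⊤ := by
  simp only [unitVec, dif_pos rfl]; rfl

lemma unitVec_ne {G : Set L} {x : L} (g h : factorsOf G x) (hne : h ≠ g) :
    unitVec g h = ⊥ := by
  simp only [unitVec, dif_neg hne]; rfl

/-- every element is the supremum of its factors. -/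
lemma le_of_factors_le {G : Set L} (hG : IsBuildingSet L G) {z b : L}
    (hb : ∀ g ∈ factorsOf G z, g ≤ b) : z ≤ b := by
  rcases (bot_le : (⊥ : L) ≤ z).lt_or_eq with h0 | h0
  · obtain ⟨φ, hφ⟩ := hG.2 z h0
    have hb' : z ⊓ b ≤ z := inf_le_left
    have key : φ.symm ⟨z ⊓ b, hb'⟩ = ⊤ := by
      funext g
      refine le_antisymm le_top ?_
      have hu : unitVec g ≤ φ.symm ⟨z ⊓ b, hb'⟩ := by
        rw [φ.le_symm_apply]
        have : φ (unitVec g) = ⟨(g : L), g.2.2.1⟩ := hφ g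
        rw [this]
        exact Subtype.mk_le_mk.2 (le_inf g.2.2.1 (hb _ g.2))
      have := hu g
      rwa [unitVec_self] at this
    have := congrArg φ key
    rw [φ.apply_symm_apply, map_top] at this
    have hzb : z ⊓ b = z := congrArg Subtype.val this
    exact inf_eq_left.mp hzb
  · exact h0 ▸ bot_le

/-- two distinct factors intersect trivially. -/
lemma factors_inf_bot {G : Set L} (hG : IsBuildingSet L G) {x : L} (hx : ⊥ < x)
    {g₁ g₂ : L} (h₁ : g₁ ∈ factorsOf G x) (h₂ : g₂ ∈ factorsOf G x) (hne : g₁ ≠ g₂)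
    {z : L} (hz₁ : z ≤ g₁) (hz₂ : z ≤ g₂) : z = ⊥ := by
  obtain ⟨φ, hφ⟩ := hG.2 x hx
  have hzx : z ≤ x := hz₁.trans h₁.2.1
  have w₁ : φ.symm ⟨z, hzx⟩ ≤ unitVec ⟨g₁, h₁⟩ := by
    rw [φ.symm_apply_le]
    have : φ (unitVec ⟨g₁, h₁⟩) = ⟨g₁, h₁.2.1⟩ := hφ _
    rw [this]; exact Subtype.mk_le_mk.2 hz₁
  have w₂ : φ.symm ⟨z, hzx⟩ ≤ unitVec ⟨g₂, h₂⟩ := by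
    rw [φ.symm_apply_le]
    have : φ (unitVec ⟨g₂, h₂⟩) = ⟨g₂, h₂.2.1⟩ := hφ _
    rw [this]; exact Subtype.mk_le_mk.2 hz₂
  have key : φ.symm ⟨z, hzx⟩ = ⊥ := by
    funext g
    refine le_antisymm ?_ bot_le
    by_cases hg : g = ⟨g₁, h₁⟩
    · have hne2 : g ≠ ⟨g₂, h₂⟩ := by
        rw [hg]; intro hc; exact hne (congrArg Subtype.val hc)
      have := w₂ g
      rwa [unitVec_ne _ _ hne2] at this
    · have := w₁ g
      rwa [unitVec_ne _ _ hg] at this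
  have := congrArg φ key
  rw [φ.apply_symm_apply, map_bot] at this
  exact congrArg Subtype.val this

/-- every member of `G` below `x` is below some factor of `x`. -/
lemma exists_factor_ge {G : Set L} {x k : L} (hk : k ∈ G) (hkx : k ≤ x) :
    ∃ g ∈ factorsOf G x, k ≤ g := by
  obtain ⟨m, hm, hmax⟩ := Set.Finite.exists_maximalFor id {m : L | m ∈ G ∧ k ≤ m ∧ m ≤ x}
    (Set.toFinite _) ⟨k, hk, le_rfl, hkx⟩
  exact ⟨m, ⟨hm.1, hm.2.2, fun h hh hhx hmh => le_antisymm hmh (hmax ⟨hh, hm.2.1.trans hmh, hhx⟩ hmh)⟩, hm.2.1⟩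

/-- a factor of `y ⊔ h` other than the one above `h` is below `y`. -/
lemma factor_le_left {G : Set L} (hG : IsBuildingSet L G) {y h xt g : L}
    (hx : ⊥ < y ⊔ h) (hxt : xt ∈ factorsOf G (y ⊔ h)) (hhxt : h ≤ xt)
    (hg : g ∈ factorsOf G (y ⊔ h)) (hne : g ≠ xt) : g ≤ y := by
  obtain ⟨φ, hφ⟩ := hG.2 (y ⊔ h) hx
  set u := φ.symm ⟨y, le_sup_left⟩ with hu_def
  set v := φ.symm ⟨h, le_sup_right⟩ with hv_def
  have hv : v ≤ unitVec ⟨xt, hxt⟩ := by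
    rw [hv_def, φ.symm_apply_le]
    have : φ (unitVec ⟨xt, hxt⟩) = ⟨xt, hxt.2.1⟩ := hφ _
    rw [this]; exact Subtype.mk_le_mk.2 hhxt
  have huv : u ⊔ v = ⊤ := by
    rw [hu_def, hv_def, ← φ.symm.map_sup]
    have h1 : (⟨y, le_sup_left⟩ ⊔ ⟨h, le_sup_right⟩ : Set.Iic (y ⊔ h)) = ⊤ := Subtype.ext rfl
    rw [h1, map_top]
  set gg : factorsOf G (y ⊔ h) := ⟨g, hg⟩ with hgg
  have hggne : gg ≠ ⟨xt, hxt⟩ := by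
    intro hc; exact hne (congrArg Subtype.val hc)
  have h1 : u gg ⊔ v gg = ⊤ := congrFun huv gg
  have h2 : v gg = ⊥ := le_antisymm (by have := hv gg; rwa [unitVec_ne _ _ hggne] at this) bot_le
  have h3 : u gg = ⊤ := by rw [h2, sup_bot_eq] at h1; exact h1
  have h4 : unitVec gg ≤ u := by
    intro g'
    by_cases hg' : g' = gg
    · subst hg'
      rw [unitVec_self, h3]
    · rw [unitVec_ne _ _ hg']
      exact bot_le
  have h5 : φ (unitVec gg) ≤ φ u := φ.monotone h4
  have h6 : φ (unitVec gg) = ⟨g, hg.2.1⟩ := hφ gg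
  rw [h6, hu_def, φ.apply_symm_apply] at h5
  exact h5

end Aux

/-- let `G` be a building set in a geometric lattice `L`, `y > ⊥`,
and `h` an atom with `h ≰ y`.  If `x_t` is the factor of `y ∨ h` above `h`,
then there is a unique `y' ∈ [⊥, x_t]` with
`F(L,G;y) = (F(L,G;y∨h) \ {x_t}) ∪ F(L,G;y')`. -/
theorem factors_of_join_with_atom {L : Type} [Lattice L] [BoundedOrder L] [Fintype L]
    [DecidableEq L] (hgeo : IsGeomLat L) (G : Set L) (hG : IsBuildingSet L G)
    (y : L) (hy : ⊥ < y) (h : L) (hh : IsAtom h) (hhy : ¬ h ≤ y)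
    (xt : L) (hxt : xt ∈ factorsOf G (y ⊔ h)) (hhxt : h ≤ xt) :
    ∃! y' : L, y' ≤ xt ∧
      factorsOf G y = (factorsOf G (y ⊔ h) \ {xt}) ∪ factorsOf G y' := by
  have hx : ⊥ < y ⊔ h := lt_of_lt_of_le hy le_sup_left
  -- the factor-set equation for `y' = y ⊓ xt`
  have E : factorsOf G y = (factorsOf G (y ⊔ h) \ {xt}) ∪ factorsOf G (y ⊓ xt) := by
    apply Set.Subset.antisymm
    · intro g hg
      obtain ⟨g', hg', hle⟩ := exists_factor_ge hg.1 (hg.2.1.trans le_sup_left)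
      by_cases hgx : g' = xt
      · right
        refine ⟨hg.1, le_inf hg.2.1 (hgx ▸ hle), ?_⟩
        intro k hk hky' hgk
        exact hg.2.2 k hk (hky'.trans inf_le_left) hgk
      · left
        have hgy : g' ≤ y := factor_le_left hG hx hxt hhxt hg' hgx
        have heq : g = g' := hg.2.2 g' hg'.1 hgy hle
        exact ⟨heq ▸ hg', by rw [Set.mem_singleton_iff, heq]; exact hgx⟩
    · intro g hg
      rcases hg with hg | hg
      · have hne : g ≠ xt := hg.2
        refine ⟨hg.1.1, factor_le_left hG hx hxt hhxt hg.1 hne, ?_⟩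
        intro k hk hky hgk
        exact hg.1.2.2 k hk (hky.trans le_sup_left) hgk
      · refine ⟨hg.1, hg.2.1.trans inf_le_left, ?_⟩
        intro k hk hky hgk
        obtain ⟨g'', hg'', hkg⟩ := exists_factor_ge hk (hky.trans le_sup_left)
        by_cases hgx : g'' = xt
        · exact hg.2.2 k hk (le_inf hky (hgx ▸ hkg)) hgk
        · exfalso
          have hbot : g = ⊥ :=
            factors_inf_bot hG hx hg'' hxt hgx (hgk.trans hkg) (hg.2.1.trans inf_le_right)
          exact (hG.1 g hg.1).ne' hbot
  -- any solution has factor set `factorsOf G y \ (F \ {xt})`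
  have key : ∀ y'' : L, y'' ≤ xt →
      factorsOf G y = (factorsOf G (y ⊔ h) \ {xt}) ∪ factorsOf G y'' →
      factorsOf G y'' = factorsOf G y \ (factorsOf G (y ⊔ h) \ {xt}) := by
    intro y'' hle heq
    apply Set.Subset.antisymm
    · intro g hg
      refine ⟨heq ▸ Set.mem_union_right _ hg, ?_⟩
      intro hgF
      have : g = xt := hgF.1.2.2 xt hxt.1 hxt.2.1 (hg.2.1.trans hle)
      exact hgF.2 this
    · intro g hg
      have := heq ▸ hg.1
      rcases this with h1 | h1
      · exact absurd h1 hg.2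
      · exact h1
  refine ⟨y ⊓ xt, ⟨inf_le_right, E⟩, ?_⟩
  intro y₁ ⟨h1, h2⟩
  have e1 := key y₁ h1 h2
  have e2 := key (y ⊓ xt) inf_le_right E
  have e3 : factorsOf G y₁ = factorsOf G (y ⊓ xt) := e1.trans e2.symm
  apply le_antisymm
  · exact le_of_factors_le hG (fun g hg => (e3 ▸ hg : g ∈ factorsOf G (y ⊓ xt)).2.1)
  · exact le_of_factors_le hG (fun g hg => (e3 ▸ hg : g ∈ factorsOf G y₁).2.1)
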